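/- Let A and Â be n×m real matrices and let k ≤ min(n,m). Suppose ‖Â − A‖ ≤ ε with ε < σ_k(A)/12. Let (Û, D̂, V̂) be a rank-k truncated SVD of Â and let Ŵ = Û D̂⁻¹. Then the k×k matrix M := Ŵᵀ A Aᵀ Ŵ is symmetric positive definite, and ‖I_k − M^{1/2}‖ ≤ 6ε/σ_k(A) and ‖I_k − M^{−1/2}‖ ≤ 12ε/σ_k(A). -/

import Mathlib

open Matrix

/-- The `j`-th largest singular value (1-indexed) of a real `n × m` matrix,
defined as the square root of the `j`-th largest eigenvalue of `Aᵀ * A`;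
it is `0` when `j = 0` or `j > m`. -/
noncomputable def sval {n m : ℕ} (A : Matrix (Fin n) (Fin m) ℝ) (j : ℕ) : ℝ :=
  if 1 ≤ j ∧ j ≤ m then
    (((Finset.univ.val.map fun i =>
        Real.sqrt ((show (Aᵀ * A).IsHermitian by
          simpa using Matrix.isHermitian_conjTranspose_mul_self A).eigenvalues i)).sort (· ≤ ·)).getD
      (m - j) 0)
  else 0

/-- The spectral norm (ℓ₂ operator norm) of a real matrix, i.e. its largest singular value. -/
noncomputable def matSpectralNorm {n m : ℕ} (A : Matrix (Fin n) (Fin m) ℝ) : ℝ := sval A 1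

/-- Euclidean norm of a vector. -/
noncomputable def evnorm {n : ℕ} (x : Fin n → ℝ) : ℝ := Real.sqrt (∑ i, (x i) ^ 2)

/-- `M^{1/2}`: the unique positive semidefinite square root of a positive semidefinite
real matrix (junk value `0` if `M` is not positive semidefinite). -/
noncomputable def msqrt {k : ℕ} (M : Matrix (Fin k) (Fin k) ℝ) : Matrix (Fin k) (Fin k) ℝ :=
  by classical exact if h : M.PosSemidef then
    h.1.eigenvectorUnitary.1 * diagonal ((↑) ∘ (√·) ∘ h.1.eigenvalues) *
      (star h.1.eigenvectorUnitary : Matrix (Fin k) (Fin k) ℝ) else 0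

lemma Matrix.isHermitian_transpose_mul_self {n m : ℕ} (A : Matrix (Fin n) (Fin m) ℝ) :
    (Aᵀ * A).IsHermitian := by
  simpa using Matrix.isHermitian_conjTranspose_mul_self A

section evnormSec
variable {p q : ℕ} (x y : Fin p → ℝ)

lemma evnorm_eq_norm : evnorm x = ‖(WithLp.equiv 2 (Fin p → ℝ)).symm x‖ := by
  rw [EuclideanSpace.norm_eq]
  simp [evnorm, Real.norm_eq_abs, sq_abs]

lemma evnorm_coe (v : EuclideanSpace ℝ (Fin p)) : evnorm ⇑v = ‖v‖ := by
  rw [evnorm_eq_norm]; rfl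

lemma evnorm_nonneg : 0 ≤ evnorm x := Real.sqrt_nonneg _

lemma dotProduct_self_eq : x ⬝ᵥ x = evnorm x ^ 2 := by
  rw [evnorm, Real.sq_sqrt (by positivity)]
  simp [dotProduct, sq]

lemma evnorm_pos (hx : x ≠ 0) : 0 < evnorm x := by
  rw [evnorm_eq_norm]
  simpa using hx

lemma evnorm_smul (c : ℝ) : evnorm (c • x) = |c| * evnorm x := by
  rw [evnorm_eq_norm, evnorm_eq_norm, ← Real.norm_eq_abs, ← norm_smul]
  congr 1

lemma evnorm_add_le : evnorm (x + y) ≤ evnorm x + evnorm y := by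
  rw [evnorm_eq_norm, evnorm_eq_norm, evnorm_eq_norm]
  exact norm_add_le _ _

lemma dotProduct_le : x ⬝ᵥ y ≤ evnorm x * evnorm y := by
  have h := abs_real_inner_le_norm ((WithLp.equiv 2 (Fin p → ℝ)).symm x)
    ((WithLp.equiv 2 (Fin p → ℝ)).symm y)
  rw [← evnorm_eq_norm, ← evnorm_eq_norm] at h
  refine le_trans (le_abs_self _) (le_trans (le_of_eq ?_) h)
  rw [real_inner_comm]
  simp [EuclideanSpace.inner_eq_star_dotProduct, dotProduct, mul_comm]

lemma le_of_sq_le_sq' {a b : ℝ} (hb : 0 ≤ b) (h : a ^ 2 ≤ b ^ 2) (ha : 0 ≤ a) : a ≤ b := by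
  nlinarith

end evnormSec

section qf
variable {p q : ℕ}

lemma star_eq_transpose (U : Matrix (Fin p) (Fin q) ℝ) : Uᴴ = Uᵀ :=
  conjTranspose_eq_transpose_of_trivial U

lemma dot_mulVec_self (U : Matrix (Fin p) (Fin q) ℝ) (hU : Uᵀ * U = 1) (x : Fin q → ℝ) :
    (U *ᵥ x) ⬝ᵥ (U *ᵥ x) = x ⬝ᵥ x := by
  rw [dotProduct_mulVec, ← mulVec_transpose, mulVec_mulVec, hU, one_mulVec]

lemma evnorm_mulVec_orth (U : Matrix (Fin p) (Fin q) ℝ) (hU : Uᵀ * U = 1) (x : Fin q → ℝ) :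
    evnorm (U *ᵥ x) = evnorm x := by
  have h := dot_mulVec_self U hU x
  rw [dotProduct_self_eq, dotProduct_self_eq] at h
  exact le_antisymm (le_of_sq_le_sq' (evnorm_nonneg x) (le_of_eq h) (evnorm_nonneg _))
    (le_of_sq_le_sq' (evnorm_nonneg _) (le_of_eq h.symm) (evnorm_nonneg x))

lemma QF {H : Matrix (Fin p) (Fin p) ℝ} (hH : H.IsHermitian) (x : Fin p → ℝ) :
    x ⬝ᵥ (H *ᵥ x) = ∑ i, hH.eigenvalues i * ((hH.eigenvectorUnitary : Matrix (Fin p) (Fin p) ℝ)ᵀ *ᵥ x) i ^ 2 ∧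
    x ⬝ᵥ x = ∑ i, (((hH.eigenvectorUnitary : Matrix (Fin p) (Fin p) ℝ)ᵀ *ᵥ x) i) ^ 2 := by
  set U : Matrix (Fin p) (Fin p) ℝ := (hH.eigenvectorUnitary : Matrix (Fin p) (Fin p) ℝ) with hUdef
  have hUU : Uᵀ * U = 1 := by
    rw [← star_eq_transpose]
    exact Unitary.coe_star_mul_self hH.eigenvectorUnitary
  set y := Uᵀ *ᵥ x with hy
  constructor
  · conv_lhs => rw [hH.spectral_theorem, Unitary.conjStarAlgAut_apply]
    rw [Matrix.star_eq_conjTranspose, star_eq_transpose, ← mulVec_mulVec, ← mulVec_mulVec,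
      dotProduct_mulVec, ← mulVec_transpose, ← hy]
    have : y ⬝ᵥ (diagonal (RCLike.ofReal ∘ hH.eigenvalues) *ᵥ y)
        = ∑ i, hH.eigenvalues i * y i ^ 2 := by
      simp only [dotProduct, mulVec_diagonal, Function.comp_apply, RCLike.ofReal_real_eq_id,
        id_eq]
      exact Finset.sum_congr rfl fun i _ => by ring
    exact this
  · have hUUt : U * Uᵀ = 1 := by
      rw [← star_eq_transpose]
      exact Unitary.coe_mul_star_self hH.eigenvectorUnitary
    have : y ⬝ᵥ y = x ⬝ᵥ x := by
      rw [hy]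
      rw [dot_mulVec_self Uᵀ (by rw [transpose_transpose]; exact hUUt) x]
    rw [← this]
    simp [dotProduct, sq]

end qf

section sv
variable {p q : ℕ} (A : Matrix (Fin p) (Fin q) ℝ)

noncomputable def svfun : Fin q → ℝ :=
  fun i => Real.sqrt ((Matrix.isHermitian_transpose_mul_self A).eigenvalues i)
noncomputable def svperm : Equiv.Perm (Fin q) := Tuple.sort (svfun A)
lemma svfun_mono : Monotone (svfun A ∘ svperm A) := Tuple.monotone_sort _

lemma sval_eq' {j : ℕ} (h1 : 1 ≤ j) (h2 : j ≤ q) :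
    sval A j = svfun A (svperm A ⟨q - j, by omega⟩) := by
  rw [sval, if_pos ⟨h1, h2⟩]
  have hL : ((Finset.univ.val.map (svfun A)).sort (· ≤ ·)) = List.ofFn (svfun A ∘ svperm A) := by
    apply List.Perm.eq_of_pairwise' (Multiset.pairwise_sort _ _)
      ((svfun_mono A).sortedLE_ofFn.pairwise)
    rw [← Multiset.coe_eq_coe, Multiset.sort_eq, List.ofFn_eq_map, ← Multiset.map_coe]
    have huniv : (↑(List.finRange q) : Multiset (Fin q)) = Finset.univ.val := rfl
    rw [huniv, ← Multiset.map_map]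
    congr 1
    have := congrArg Finset.val (Finset.map_univ_equiv (svperm A))
    rw [Finset.map_val] at this
    exact this.symm
  rw [show (fun i => Real.sqrt ((Matrix.isHermitian_transpose_mul_self A).eigenvalues i)) = svfun A from rfl]
  rw [hL, List.getD_eq_getElem _ _ (by simp; omega), List.getElem_ofFn]
  rfl

lemma svfun_nonneg (i : Fin q) : 0 ≤ svfun A i := Real.sqrt_nonneg _

lemma eigTA_nonneg (i : Fin q) : 0 ≤ (Matrix.isHermitian_transpose_mul_self A).eigenvalues i := by
  have hpsd : (Aᵀ * A).PosSemidef := by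
    have := Matrix.posSemidef_conjTranspose_mul_self A
    rwa [conjTranspose_eq_transpose_of_trivial] at this
  exact hpsd.eigenvalues_nonneg i

lemma svfun_sq (i : Fin q) :
    svfun A i ^ 2 = (Matrix.isHermitian_transpose_mul_self A).eigenvalues i :=
  Real.sq_sqrt (eigTA_nonneg A i)

lemma sval_nonneg (j : ℕ) : 0 ≤ sval A j := by
  by_cases h : 1 ≤ j ∧ j ≤ q
  · rw [sval_eq' A h.1 h.2]; exact svfun_nonneg A _
  · rw [sval, if_neg h]

lemma sval_antitone {j j' : ℕ} (h1 : 1 ≤ j) (hjj : j ≤ j') (h2 : j' ≤ q) :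
    sval A j' ≤ sval A j := by
  rw [sval_eq' A h1 (le_trans hjj h2), sval_eq' A (le_trans h1 hjj) h2]
  exact svfun_mono A (by simp [Fin.mk_le_mk]; omega)

lemma svfun_le_sval_one (i : Fin q) (hq : 1 ≤ q) : svfun A i ≤ sval A 1 := by
  rw [sval_eq' A le_rfl hq]
  have : svfun A i = (svfun A ∘ svperm A) ((svperm A).symm i) := by simp
  rw [this]
  exact svfun_mono A (by simp [Fin.le_def]; omega)

lemma matSpectralNorm_nonneg : 0 ≤ matSpectralNorm A := sval_nonneg A 1

lemma mulVec_dot_eq (x : Fin q → ℝ) : (A *ᵥ x) ⬝ᵥ (A *ᵥ x) = x ⬝ᵥ ((Aᵀ * A) *ᵥ x) := by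
  rw [← mulVec_mulVec, dotProduct_mulVec (A *ᵥ x), ← mulVec_transpose, dotProduct_comm]

lemma evnorm_mulVec_le (x : Fin q → ℝ) :
    evnorm (A *ᵥ x) ≤ matSpectralNorm A * evnorm x := by
  rcases Nat.eq_zero_or_pos q with hq | hq
  · subst hq
    have hx : x = 0 := Subsingleton.elim _ _
    subst hx
    simp [mulVec_zero, evnorm]
  · apply le_of_sq_le_sq' (mul_nonneg (matSpectralNorm_nonneg A) (evnorm_nonneg x)) _
      (evnorm_nonneg _)
    rw [mul_pow, ← dotProduct_self_eq, ← dotProduct_self_eq, mulVec_dot_eq,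
      (QF (Matrix.isHermitian_transpose_mul_self A) x).1,
      (QF (Matrix.isHermitian_transpose_mul_self A) x).2]
    rw [Finset.mul_sum]
    apply Finset.sum_le_sum
    intro i _
    have h1 : (Matrix.isHermitian_transpose_mul_self A).eigenvalues i ≤ matSpectralNorm A ^ 2 := by
      rw [← svfun_sq A i]
      have := svfun_le_sval_one A i hq
      have h0 := svfun_nonneg A i
      exact pow_le_pow_left₀ h0 this 2
    nlinarith [sq_nonneg ((((Matrix.isHermitian_transpose_mul_self A).eigenvectorUnitary
      : Matrix (Fin q) (Fin q) ℝ)ᵀ *ᵥ x) i)]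

lemma matSpectralNorm_le {c : ℝ} (hc : 0 ≤ c)
    (h : ∀ x, evnorm (A *ᵥ x) ≤ c * evnorm x) : matSpectralNorm A ≤ c := by
  rcases Nat.eq_zero_or_pos q with hq | hq
  · subst hq
    rw [matSpectralNorm, sval, if_neg (by omega)]
    exact hc
  · rw [matSpectralNorm, sval_eq' A le_rfl hq]
    set hA := Matrix.isHermitian_transpose_mul_self A
    set i0 : Fin q := svperm A ⟨q - 1, by omega⟩
    set x : Fin q → ℝ := ⇑(hA.eigenvectorBasis i0) with hx
    have hx1 : evnorm x = 1 := by
      rw [hx, evnorm_coe]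
      exact hA.eigenvectorBasis.orthonormal.1 i0
    have hsq : evnorm (A *ᵥ x) ^ 2 = hA.eigenvalues i0 := by
      rw [← dotProduct_self_eq, mulVec_dot_eq,
        hx, hA.mulVec_eigenvectorBasis i0]
      rw [dotProduct_smul]
      have : x ⬝ᵥ x = 1 := by rw [dotProduct_self_eq, hx1]; norm_num
      rw [smul_eq_mul, this, mul_one]
    have : svfun A i0 = evnorm (A *ᵥ x) := by
      rw [show svfun A i0 = Real.sqrt (hA.eigenvalues i0) from rfl, ← hsq,
        Real.sqrt_sq (evnorm_nonneg _)]
    rw [this]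
    calc evnorm (A *ᵥ x) ≤ c * evnorm x := h x
      _ = c := by rw [hx1, mul_one]

end sv

section svops
variable {p q r : ℕ}

lemma evnorm_neg (x : Fin p → ℝ) : evnorm (-x) = evnorm x := by simp [evnorm]

lemma matSpectralNorm_transpose_le (A : Matrix (Fin p) (Fin q) ℝ) :
    matSpectralNorm Aᵀ ≤ matSpectralNorm A := by
  apply matSpectralNorm_le _ (matSpectralNorm_nonneg A)
  intro x
  set a := evnorm (Aᵀ *ᵥ x) with hadef
  have ha : 0 ≤ a := evnorm_nonneg _
  rcases eq_or_lt_of_le ha with h0 | h0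
  · rw [← h0]; exact mul_nonneg (matSpectralNorm_nonneg A) (evnorm_nonneg x)
  · have key : a ^ 2 ≤ (matSpectralNorm A * evnorm x) * a := by
      rw [hadef, ← dotProduct_self_eq]
      calc (Aᵀ *ᵥ x) ⬝ᵥ (Aᵀ *ᵥ x) = (A *ᵥ (Aᵀ *ᵥ x)) ⬝ᵥ x := by
            rw [dotProduct_mulVec, vecMul_transpose]
        _ ≤ evnorm (A *ᵥ (Aᵀ *ᵥ x)) * evnorm x := dotProduct_le _ _
        _ ≤ (matSpectralNorm A * a) * evnorm x := by
            have := evnorm_mulVec_le A (Aᵀ *ᵥ x)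
            exact mul_le_mul_of_nonneg_right this (evnorm_nonneg x)
        _ = (matSpectralNorm A * evnorm x) * a := by ring
    nlinarith

lemma matSpectralNorm_transpose (A : Matrix (Fin p) (Fin q) ℝ) :
    matSpectralNorm Aᵀ = matSpectralNorm A := by
  have h2 := matSpectralNorm_transpose_le Aᵀ
  rw [transpose_transpose] at h2
  exact le_antisymm (matSpectralNorm_transpose_le A) h2

lemma matSpectralNorm_mul_le (A : Matrix (Fin p) (Fin q) ℝ) (B : Matrix (Fin q) (Fin r) ℝ) :
    matSpectralNorm (A * B) ≤ matSpectralNorm A * matSpectralNorm B := by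
  apply matSpectralNorm_le _ (mul_nonneg (matSpectralNorm_nonneg A) (matSpectralNorm_nonneg B))
  intro x
  rw [← mulVec_mulVec]
  calc evnorm (A *ᵥ (B *ᵥ x)) ≤ matSpectralNorm A * evnorm (B *ᵥ x) := evnorm_mulVec_le A _
    _ ≤ matSpectralNorm A * (matSpectralNorm B * evnorm x) :=
        mul_le_mul_of_nonneg_left (evnorm_mulVec_le B x) (matSpectralNorm_nonneg A)
    _ = matSpectralNorm A * matSpectralNorm B * evnorm x := by ring

lemma matSpectralNorm_add_le (A B : Matrix (Fin p) (Fin q) ℝ) :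
    matSpectralNorm (A + B) ≤ matSpectralNorm A + matSpectralNorm B := by
  apply matSpectralNorm_le _ (add_nonneg (matSpectralNorm_nonneg A) (matSpectralNorm_nonneg B))
  intro x
  rw [add_mulVec]
  calc evnorm (A *ᵥ x + B *ᵥ x) ≤ evnorm (A *ᵥ x) + evnorm (B *ᵥ x) := evnorm_add_le _ _
    _ ≤ matSpectralNorm A * evnorm x + matSpectralNorm B * evnorm x :=
        add_le_add (evnorm_mulVec_le A x) (evnorm_mulVec_le B x)
    _ = (matSpectralNorm A + matSpectralNorm B) * evnorm x := by ring

lemma matSpectralNorm_neg (A : Matrix (Fin p) (Fin q) ℝ) :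
    matSpectralNorm (-A) = matSpectralNorm A := by
  have h : ∀ B : Matrix (Fin p) (Fin q) ℝ, matSpectralNorm (-B) ≤ matSpectralNorm B := by
    intro B
    apply matSpectralNorm_le _ (matSpectralNorm_nonneg B)
    intro x
    rw [neg_mulVec, evnorm_neg]
    exact evnorm_mulVec_le B x
  have h2 := h (-A)
  rw [neg_neg] at h2
  exact le_antisymm (h A) h2

lemma evnorm_diag_le (d : Fin p → ℝ) {c : ℝ} (hc : 0 ≤ c) (hd : ∀ i, |d i| ≤ c)
    (x : Fin p → ℝ) : evnorm (diagonal d *ᵥ x) ≤ c * evnorm x := by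
  rw [evnorm, evnorm]
  have hstep : ∀ i : Fin p, ((diagonal d *ᵥ x) i) ^ 2 ≤ c ^ 2 * (x i) ^ 2 := by
    intro i
    rw [mulVec_diagonal]
    have h1 := hd i
    have h2 := abs_nonneg (d i)
    calc (d i * x i) ^ 2 = (d i)^2 * (x i)^2 := by ring
      _ ≤ c ^ 2 * (x i)^2 := by
          apply mul_le_mul_of_nonneg_right _ (sq_nonneg (x i))
          rw [← sq_abs (d i)]
          exact pow_le_pow_left₀ (abs_nonneg _) h1 2
  calc Real.sqrt (∑ i, ((diagonal d *ᵥ x) i) ^ 2)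
      ≤ Real.sqrt (∑ i, c ^ 2 * (x i) ^ 2) :=
        Real.sqrt_le_sqrt (Finset.sum_le_sum fun i _ => hstep i)
    _ = c * Real.sqrt (∑ i, (x i) ^ 2) := by
        rw [← Finset.mul_sum, Real.sqrt_mul (by positivity), Real.sqrt_sq hc]

lemma matSpectralNorm_diagonal_le (d : Fin p → ℝ) {c : ℝ} (hc : 0 ≤ c) (hd : ∀ i, |d i| ≤ c) :
    matSpectralNorm (diagonal d) ≤ c :=
  matSpectralNorm_le _ hc (evnorm_diag_le d hc hd)

lemma matSpectralNorm_orthcol_le (U : Matrix (Fin p) (Fin q) ℝ) (hU : Uᵀ * U = 1) :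
    matSpectralNorm U ≤ 1 :=
  matSpectralNorm_le _ zero_le_one fun x => by rw [evnorm_mulVec_orth U hU x, one_mul]

lemma eig_dist_one {M : Matrix (Fin p) (Fin p) ℝ} (hM : M.IsHermitian) (i : Fin p) :
    |hM.eigenvalues i - 1| ≤ matSpectralNorm (M - 1) := by
  set u : Fin p → ℝ := ⇑(hM.eigenvectorBasis i) with hu
  have hu1 : evnorm u = 1 := by
    rw [hu, evnorm_coe]
    exact hM.eigenvectorBasis.orthonormal.1 i
  have h1 : (M - 1) *ᵥ u = (hM.eigenvalues i - 1) • u := by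
    rw [sub_mulVec, hu, hM.mulVec_eigenvectorBasis, one_mulVec, sub_smul, one_smul]
  have h2 := evnorm_mulVec_le (M - 1) u
  rw [h1, evnorm_smul, hu1, mul_one, mul_one] at h2
  exact h2

lemma matSpectralNorm_conj_diag_le (U : Matrix (Fin p) (Fin p) ℝ) (hUU : Uᵀ * U = 1)
    (hUUt : U * Uᵀ = 1) (d : Fin p → ℝ) {c : ℝ} (hc : 0 ≤ c) (hd : ∀ i, |d i| ≤ c) :
    matSpectralNorm (U * diagonal d * Uᵀ) ≤ c := by
  apply matSpectralNorm_le _ hc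
  intro x
  rw [← mulVec_mulVec, ← mulVec_mulVec, evnorm_mulVec_orth U hUU]
  calc evnorm (diagonal d *ᵥ (Uᵀ *ᵥ x)) ≤ c * evnorm (Uᵀ *ᵥ x) := evnorm_diag_le d hc hd _
    _ = c * evnorm x := by
        rw [evnorm_mulVec_orth Uᵀ (by rw [transpose_transpose]; exact hUUt) x]

end svops

section weyl
variable {p q : ℕ}

lemma evnorm_sub_le (x y : Fin p → ℝ) : evnorm (x - y) ≤ evnorm x + evnorm y := by
  rw [sub_eq_add_neg]
  exact le_trans (evnorm_add_le x (-y)) (by rw [evnorm_neg])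

lemma weyl (A B : Matrix (Fin p) (Fin q) ℝ) {k : ℕ} (hk1 : 1 ≤ k) (hk2 : k ≤ q) :
    sval A k ≤ sval B k + matSpectralNorm (B - A) := by
  have hq : 1 ≤ q := le_trans hk1 hk2
  set hA := Matrix.isHermitian_transpose_mul_self A with hAdef
  set hB := Matrix.isHermitian_transpose_mul_self B with hBdef
  set τ := svperm A with hτ
  set ρ := svperm B with hρ
  -- the constraint matrix
  set C : Matrix (Fin q) (Fin q) ℝ := Matrix.of fun i j =>
    if h : (i : ℕ) < q - k then ⇑(hA.eigenvectorBasis (τ ⟨i, by omega⟩)) j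
    else if h2 : (i : ℕ) + 1 < q then ⇑(hB.eigenvectorBasis (ρ ⟨(i : ℕ) + 1, h2⟩)) j
    else 0 with hC
  have hdet : C.det = 0 := by
    apply Matrix.det_eq_zero_of_row_eq_zero ⟨q - 1, by omega⟩
    intro j
    rw [hC]
    simp only [Matrix.of_apply]
    rw [dif_neg (by omega), dif_neg (by omega)]
  obtain ⟨v, hv0, hCv⟩ := (Matrix.exists_mulVec_eq_zero_iff).mpr hdet
  set yA := (hA.eigenvectorUnitary : Matrix (Fin q) (Fin q) ℝ)ᵀ *ᵥ v with hyA
  set yB := (hB.eigenvectorUnitary : Matrix (Fin q) (Fin q) ℝ)ᵀ *ᵥ v with hyB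
  have hyAl : ∀ l, yA l = ⇑(hA.eigenvectorBasis l) ⬝ᵥ v := by
    intro l
    rw [hyA]
    simp only [mulVec, dotProduct, transpose_apply]
    exact Finset.sum_congr rfl fun x _ => by rw [Matrix.IsHermitian.eigenvectorUnitary_apply]
  have hyBl : ∀ l, yB l = ⇑(hB.eigenvectorBasis l) ⬝ᵥ v := by
    intro l
    rw [hyB]
    simp only [mulVec, dotProduct, transpose_apply]
    exact Finset.sum_congr rfl fun x _ => by rw [Matrix.IsHermitian.eigenvectorUnitary_apply]
  have hrow : ∀ i : Fin q, C i ⬝ᵥ v = 0 := by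
    intro i
    have : (C *ᵥ v) i = (0 : Fin q → ℝ) i := by rw [hCv]
    exact this
  have claim1 : ∀ i : Fin q, (i : ℕ) < q - k → yA (τ ⟨i, by omega⟩) = 0 := by
    intro i hi
    have h := hrow i
    have hCi : C i = ⇑(hA.eigenvectorBasis (τ ⟨i, by omega⟩)) := by
      funext j
      rw [hC]
      simp only [Matrix.of_apply]
      rw [dif_pos hi]
    rw [hyAl, ← hCi]
    exact h
  have claim2 : ∀ j : Fin q, q - k < (j : ℕ) → yB (ρ j) = 0 := by
    intro j hj
    have hjq : (j : ℕ) - 1 < q := by omega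
    have h := hrow ⟨(j : ℕ) - 1, hjq⟩
    have hCi : C ⟨(j : ℕ) - 1, hjq⟩ = ⇑(hB.eigenvectorBasis (ρ j)) := by
      funext l
      rw [hC]
      simp only [Matrix.of_apply]
      rw [dif_neg (by omega), dif_pos (show ((j : ℕ) - 1) + 1 < q by omega)]
      have hje : (⟨(j : ℕ) - 1 + 1, by omega⟩ : Fin q) = j := Fin.ext (by simp; omega)
      rw [hje]
    rw [hyBl, ← hCi]
    exact h
  have hqk : q - k < q := by omega
  have hAlow : sval A k * evnorm v ≤ evnorm (A *ᵥ v) := by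
    apply le_of_sq_le_sq' (evnorm_nonneg _) _ (mul_nonneg (sval_nonneg A k) (evnorm_nonneg v))
    rw [mul_pow, ← dotProduct_self_eq, ← dotProduct_self_eq, mulVec_dot_eq,
      (QF hA v).1, (QF hA v).2, ← hyA]
    rw [← Equiv.sum_comp τ (fun l => hA.eigenvalues l * yA l ^ 2),
      ← Equiv.sum_comp τ (fun l => yA l ^ 2), Finset.mul_sum]
    apply Finset.sum_le_sum
    intro i _
    by_cases hcase : (i : ℕ) < q - k
    · have h0 : yA (τ i) = 0 := by simpa using claim1 i hcase
      rw [h0]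
      simp
    · have hmono := svfun_mono A (show (⟨q - k, hqk⟩ : Fin q) ≤ i from by
        rw [Fin.le_def]; simp; omega)
      have h1 : sval A k ^ 2 ≤ hA.eigenvalues (τ i) := by
        rw [← svfun_sq A (τ i), sval_eq' A hk1 hk2]
        exact pow_le_pow_left₀ (svfun_nonneg A _) hmono 2
      exact mul_le_mul_of_nonneg_right h1 (sq_nonneg _)
  have hBup : evnorm (B *ᵥ v) ≤ sval B k * evnorm v := by
    apply le_of_sq_le_sq' (mul_nonneg (sval_nonneg B k) (evnorm_nonneg v)) _ (evnorm_nonneg _)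
    rw [mul_pow, ← dotProduct_self_eq, ← dotProduct_self_eq, mulVec_dot_eq,
      (QF hB v).1, (QF hB v).2, ← hyB]
    rw [← Equiv.sum_comp ρ (fun l => hB.eigenvalues l * yB l ^ 2),
      ← Equiv.sum_comp ρ (fun l => yB l ^ 2), Finset.mul_sum]
    apply Finset.sum_le_sum
    intro j _
    by_cases hcase : q - k < (j : ℕ)
    · have h0 : yB (ρ j) = 0 := claim2 j hcase
      rw [h0]
      simp
    · have hmono := svfun_mono B (show j ≤ (⟨q - k, hqk⟩ : Fin q) from Fin.mk_le_mk.mpr (by omega) )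
      have h1 : hB.eigenvalues (ρ j) ≤ sval B k ^ 2 := by
        rw [← svfun_sq B (ρ j), sval_eq' B hk1 hk2]
        exact pow_le_pow_left₀ (svfun_nonneg B _) hmono 2
      exact mul_le_mul_of_nonneg_right h1 (sq_nonneg _)
  have htri : evnorm (A *ᵥ v) ≤ evnorm (B *ᵥ v) + evnorm ((B - A) *ᵥ v) := by
    rw [show A *ᵥ v = B *ᵥ v - (B - A) *ᵥ v from by rw [sub_mulVec, sub_sub_cancel]]
    exact evnorm_sub_le _ _
  have hE := evnorm_mulVec_le (B - A) v
  have he : 0 < evnorm v := evnorm_pos v hv0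
  have hfinal : sval A k * evnorm v ≤ (sval B k + matSpectralNorm (B - A)) * evnorm v := by
    calc sval A k * evnorm v ≤ evnorm (A *ᵥ v) := hAlow
      _ ≤ evnorm (B *ᵥ v) + evnorm ((B - A) *ᵥ v) := htri
      _ ≤ sval B k * evnorm v + matSpectralNorm (B - A) * evnorm v := add_le_add hBup hE
      _ = (sval B k + matSpectralNorm (B - A)) * evnorm v := by ring
  exact le_of_mul_le_mul_right hfinal he

end weyl

lemma num_delta {σ σ' ε : ℝ} (hσpos : 0 < σ) (hσ'pos : 0 < σ') (hε0 : 0 ≤ ε)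
    (hε : ε < σ / 12) (hσ'low : σ - ε ≤ σ') :
    ε / σ' ≤ (12 / 11) * (ε / σ) ∧ ε / σ' ≤ 1 / 11 := by
  have h1 : 11 * σ / 12 ≤ σ' := by linarith
  have h2 : (0:ℝ) ≤ (12 / 11) * (ε / σ) := by positivity
  have key := mul_le_mul_of_nonneg_left h1 h2
  have he : (12 / 11) * (ε / σ) * (11 * σ / 12) = ε := by
    field_simp
  constructor
  · rw [div_le_iff₀ hσ'pos]
    linarith [key, he]
  · rw [div_le_div_iff₀ hσ'pos (by norm_num : (0:ℝ) < 11)]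
    linarith

lemma abs_one_sub_sqrt {t : ℝ} (ht : 0 ≤ t) : |1 - Real.sqrt t| ≤ |1 - t| := by
  have hs := Real.sqrt_nonneg t
  have hsq : Real.sqrt t ^ 2 = t := Real.sq_sqrt ht
  have key : |1 - t| = |1 - Real.sqrt t| * (1 + Real.sqrt t) := by
    rw [← abs_of_nonneg (show (0:ℝ) ≤ 1 + Real.sqrt t by linarith), ← abs_mul]
    congr 1
    nlinarith
  nlinarith [abs_nonneg (1 - Real.sqrt t)]

set_option maxHeartbeats 2000000 in
/-- Under the same hypotheses as Statement 0, the matrix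
`M = Ŵᵀ A Aᵀ Ŵ` is symmetric positive definite, `‖I_k − M^{1/2}‖ ≤ 6 ε / σ_k(A)` and
`‖I_k − M^{−1/2}‖ ≤ 12 ε / σ_k(A)`. -/
theorem whitened_gram_sqrt_close_to_identity
    {n m k : ℕ} (hk : k ≤ min n m)
    (A Ahat : Matrix (Fin n) (Fin m) ℝ) (ε : ℝ)
    (hpert : matSpectralNorm (Ahat - A) ≤ ε) (hε : ε < sval A k / 12)
    (Uhat : Matrix (Fin n) (Fin k) ℝ) (Vhat : Matrix (Fin m) (Fin k) ℝ)
    (Dhat : Matrix (Fin k) (Fin k) ℝ)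
    (hU : Uhatᵀ * Uhat = 1) (hV : Vhatᵀ * Vhat = 1)
    (hD : Dhat = Matrix.diagonal fun i : Fin k => sval Ahat (i.val + 1))
    (hAV : Ahat * Vhat = Uhat * Dhat) (hAU : Ahatᵀ * Uhat = Vhat * Dhat)
    (What : Matrix (Fin n) (Fin k) ℝ) (hW : What = Uhat * Dhat⁻¹)
    (M : Matrix (Fin k) (Fin k) ℝ) (hM : M = Whatᵀ * A * Aᵀ * What) :
    M.PosDef ∧
      matSpectralNorm ((1 : Matrix (Fin k) (Fin k) ℝ) - msqrt M) ≤ 6 * ε / sval A k ∧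
      matSpectralNorm ((1 : Matrix (Fin k) (Fin k) ℝ) - (msqrt M)⁻¹) ≤ 12 * ε / sval A k := by
  have hε0 : 0 ≤ ε := le_trans (matSpectralNorm_nonneg _) hpert
  rcases Nat.eq_zero_or_pos k with hk0 | hk1
  · exfalso
    subst hk0
    rw [sval, if_neg (by omega)] at hε
    linarith
  have hkm : k ≤ m := le_trans hk (min_le_right n m)
  set σ := sval A k with hσdef
  have hσpos : 0 < σ := by linarith
  have hweyl : sval A k ≤ sval Ahat k + matSpectralNorm (Ahat - A) := weyl A Ahat hk1 hkm
  set σ' := sval Ahat k with hσ'def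
  have hσ'low : σ - ε ≤ σ' := by linarith
  have hσ'pos : 0 < σ' := by linarith
  -- diagonal entries
  set d : Fin k → ℝ := fun i => sval Ahat (i.val + 1) with hddef
  have hd_ge : ∀ i, σ' ≤ d i := fun i =>
    sval_antitone Ahat (by omega) (by omega) hkm
  have hdpos : ∀ i, 0 < d i := fun i => lt_of_lt_of_le hσ'pos (hd_ge i)
  have hDhatT : Dhatᵀ = Dhat := by rw [hD, diagonal_transpose]
  have hDinv : Dhat⁻¹ = diagonal (fun i => (d i)⁻¹) := by
    apply Matrix.inv_eq_right_inv
    rw [hD, diagonal_mul_diagonal,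
      show (fun i => d i * (d i)⁻¹) = fun _ => (1:ℝ) from
        funext fun i => mul_inv_cancel₀ (hdpos i).ne', diagonal_one]
  have hDinvD : Dhat⁻¹ * Dhat = 1 := by
    rw [hDinv, hD, diagonal_mul_diagonal,
      show (fun i => (d i)⁻¹ * d i) = fun _ => (1:ℝ) from
        funext fun i => inv_mul_cancel₀ (hdpos i).ne', diagonal_one]
  have hWhatT : Whatᵀ = Dhat⁻¹ * Uhatᵀ := by
    rw [hW, transpose_mul, transpose_nonsing_inv, hDhatT]
  have hUA : Uhatᵀ * Ahat = Dhat * Vhatᵀ := by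
    have h := congrArg Matrix.transpose hAU
    rw [transpose_mul, transpose_transpose, transpose_mul, hDhatT] at h
    exact h
  have hVU : Whatᵀ * Ahat = Vhatᵀ := by
    rw [hWhatT, Matrix.mul_assoc, hUA, ← Matrix.mul_assoc, hDinvD, Matrix.one_mul]
  set F := Whatᵀ * A - Vhatᵀ with hFdef
  have hCdecomp : Whatᵀ * A = Vhatᵀ + F := by rw [hFdef]; abel
  -- norm of F
  set δ := ε / σ' with hδdef
  have hδ0 : 0 ≤ δ := div_nonneg hε0 hσ'pos.le
  have hDinvNorm : matSpectralNorm Dhat⁻¹ ≤ σ'⁻¹ := by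
    rw [hDinv]
    apply matSpectralNorm_diagonal_le _ (by positivity)
    intro i
    rw [abs_of_pos (inv_pos.mpr (hdpos i))]
    exact inv_anti₀ hσ'pos (hd_ge i)
  have hUTnorm : matSpectralNorm Uhatᵀ ≤ 1 := by
    rw [matSpectralNorm_transpose]
    exact matSpectralNorm_orthcol_le Uhat hU
  have hVnorm : matSpectralNorm Vhat ≤ 1 := matSpectralNorm_orthcol_le Vhat hV
  have hVTnorm : matSpectralNorm Vhatᵀ ≤ 1 := by
    rw [matSpectralNorm_transpose]
    exact hVnorm
  have hEnorm : matSpectralNorm (A - Ahat) ≤ ε := by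
    rw [show A - Ahat = -(Ahat - A) from (neg_sub _ _).symm, matSpectralNorm_neg]
    exact hpert
  have hWTnorm : matSpectralNorm Whatᵀ ≤ σ'⁻¹ := by
    rw [hWhatT]
    calc matSpectralNorm (Dhat⁻¹ * Uhatᵀ) ≤ matSpectralNorm Dhat⁻¹ * matSpectralNorm Uhatᵀ :=
          matSpectralNorm_mul_le _ _
      _ ≤ σ'⁻¹ * 1 := mul_le_mul hDinvNorm hUTnorm (matSpectralNorm_nonneg _) (by positivity)
      _ = σ'⁻¹ := mul_one _
  have hFnorm : matSpectralNorm F ≤ δ := by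
    have hF2 : F = Whatᵀ * (A - Ahat) := by rw [Matrix.mul_sub, hVU]
    rw [hF2]
    calc matSpectralNorm (Whatᵀ * (A - Ahat))
        ≤ matSpectralNorm Whatᵀ * matSpectralNorm (A - Ahat) := matSpectralNorm_mul_le _ _
      _ ≤ σ'⁻¹ * ε := mul_le_mul hWTnorm hEnorm (matSpectralNorm_nonneg _) (by positivity)
      _ = δ := by rw [hδdef, div_eq_inv_mul]
  have hFTnorm : matSpectralNorm Fᵀ ≤ δ := by rw [matSpectralNorm_transpose]; exact hFnorm
  -- M decomposition
  have hMfact : M = (Whatᵀ * A) * (Whatᵀ * A)ᵀ := by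
    rw [hM, transpose_mul, transpose_transpose]
    exact Matrix.mul_assoc _ _ _
  have hMfact2 : M = (Vhatᵀ + F) * (Vhatᵀ + F)ᵀ := by rw [hMfact, hCdecomp]
  have hMexp : M - 1 = Vhatᵀ * Fᵀ + F * Vhat + F * Fᵀ := by
    have hexp : (Vhatᵀ + F) * (Vhatᵀ + F)ᵀ
        = Vhatᵀ * Vhat + (Vhatᵀ * Fᵀ + F * Vhat + F * Fᵀ) := by
      rw [transpose_add, transpose_transpose, Matrix.add_mul, Matrix.mul_add, Matrix.mul_add]
      abel
    rw [hMfact2, hexp, hV]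
    abel
  set c := 2 * δ + δ ^ 2 with hcdef
  have hMnorm : matSpectralNorm (M - 1) ≤ c := by
    rw [hMexp, hcdef]
    calc matSpectralNorm (Vhatᵀ * Fᵀ + F * Vhat + F * Fᵀ)
        ≤ matSpectralNorm (Vhatᵀ * Fᵀ + F * Vhat) + matSpectralNorm (F * Fᵀ) :=
          matSpectralNorm_add_le _ _
      _ ≤ (matSpectralNorm (Vhatᵀ * Fᵀ) + matSpectralNorm (F * Vhat)) + matSpectralNorm (F * Fᵀ) :=
          add_le_add (matSpectralNorm_add_le _ _) le_rfl
      _ ≤ (1 * δ + δ * 1) + δ * δ := by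
          apply add_le_add (add_le_add ?_ ?_) ?_
          · exact le_trans (matSpectralNorm_mul_le _ _)
              (mul_le_mul hVTnorm hFTnorm (matSpectralNorm_nonneg _) zero_le_one)
          · exact le_trans (matSpectralNorm_mul_le _ _)
              (mul_le_mul hFnorm hVnorm (matSpectralNorm_nonneg _) hδ0)
          · exact le_trans (matSpectralNorm_mul_le _ _)
              (mul_le_mul hFnorm hFTnorm (matSpectralNorm_nonneg _) hδ0)
      _ = 2 * δ + δ ^ 2 := by ring
  -- numeric bounds
  have hη0 : 0 ≤ ε / σ := by positivity
  have hδle : δ ≤ (12 / 11) * (ε / σ) := by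
    rw [hδdef]
    exact (num_delta hσpos hσ'pos hε0 hε hσ'low).1
  have hδ11 : δ ≤ 1 / 11 := by
    rw [hδdef]
    exact (num_delta hσpos hσ'pos hε0 hε hσ'low).2
  have hδsq : δ ^ 2 ≤ (1 / 11) * δ := by
    rw [pow_two]
    exact mul_le_mul_of_nonneg_right hδ11 hδ0
  have hc1 : c ≤ (23 / 11) * δ := by rw [hcdef]; linarith
  have hc2 : c ≤ (276 / 121) * (ε / σ) := by
    have h3 := mul_le_mul_of_nonneg_left hδle (show (0:ℝ) ≤ 23 / 11 by norm_num)
    have heq : (23 / 11 : ℝ) * ((12 / 11) * (ε / σ)) = (276 / 121) * (ε / σ) := by ring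
    linarith
  have hcs : c ≤ 23 / 121 := by
    have h3 := mul_le_mul_of_nonneg_left hδ11 (show (0:ℝ) ≤ 23 / 11 by norm_num)
    linarith
  have hc0 : 0 ≤ c := by positivity
  -- positive semidefiniteness and eigenvalues of M
  have hMpsd : M.PosSemidef := by
    rw [hMfact, ← star_eq_transpose]
    exact posSemidef_self_mul_conjTranspose _
  have hMh : M.IsHermitian := hMpsd.1
  have hνdist : ∀ i, |hMh.eigenvalues i - 1| ≤ c :=
    fun i => le_trans (eig_dist_one hMh i) hMnorm
  have hνlow : ∀ i, 98 / 121 ≤ hMh.eigenvalues i := by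
    intro i
    have h := abs_le.mp (hνdist i)
    linarith [h.1]
  have hν0 : ∀ i, (0:ℝ) ≤ hMh.eigenvalues i := fun i => le_trans (by norm_num) (hνlow i)
  have hPD : M.PosDef := by
    refine Matrix.posDef_iff_dotProduct_mulVec.mpr ⟨hMh, fun x hx => ?_⟩
    have hQ := QF hMh x
    rw [show star x = x from by simp, hQ.1]
    have hxx : 0 < x ⬝ᵥ x := by
      rw [dotProduct_self_eq]
      exact pow_pos (evnorm_pos x hx) 2
    have hlow : (98 / 121 : ℝ) * (x ⬝ᵥ x) ≤ ∑ i, hMh.eigenvalues i *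
        ((hMh.eigenvectorUnitary : Matrix (Fin k) (Fin k) ℝ)ᵀ *ᵥ x) i ^ 2 := by
      rw [hQ.2, Finset.mul_sum]
      exact Finset.sum_le_sum fun i _ =>
        mul_le_mul_of_nonneg_right (hνlow i) (sq_nonneg _)
    linarith
  -- square-root machinery
  set Um : Matrix (Fin k) (Fin k) ℝ := (hMh.eigenvectorUnitary : Matrix (Fin k) (Fin k) ℝ)
    with hUmdef
  have hUmU : Umᵀ * Um = 1 := by
    rw [hUmdef, ← star_eq_transpose]
    exact Unitary.coe_star_mul_self hMh.eigenvectorUnitary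
  have hUmUt : Um * Umᵀ = 1 := by
    rw [hUmdef, ← star_eq_transpose]
    exact Unitary.coe_mul_star_self hMh.eigenvectorUnitary
  have cancel : ∀ D : Matrix (Fin k) (Fin k) ℝ, Umᵀ * (Um * D * Umᵀ) = D * Umᵀ := by
    intro D
    rw [← Matrix.mul_assoc, ← Matrix.mul_assoc, hUmU, Matrix.one_mul]
  set g : Fin k → ℝ := fun i => Real.sqrt (hMh.eigenvalues i) with hgdef
  have hspec : M = Um * diagonal hMh.eigenvalues * Umᵀ := by
    have h := hMh.spectral_theorem
    rw [Unitary.conjStarAlgAut_apply, Matrix.star_eq_conjTranspose, star_eq_transpose,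
      show RCLike.ofReal ∘ hMh.eigenvalues = hMh.eigenvalues from funext fun i => by simp] at h
    exact h
  have hS : (Um * diagonal g * Umᵀ).PosSemidef := by
    have hdg : (diagonal g).PosSemidef :=
      posSemidef_diagonal_iff.mpr fun i => Real.sqrt_nonneg _
    have h := hdg.mul_mul_conjTranspose_same Um
    rwa [star_eq_transpose] at h
  have hS2 : (Um * diagonal g * Umᵀ) ^ 2 = M := by
    rw [pow_two, Matrix.mul_assoc (Um * diagonal g) Umᵀ _, cancel _, ← Matrix.mul_assoc,
      Matrix.mul_assoc Um (diagonal g) (diagonal g), diagonal_mul_diagonal,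
      show (fun i => g i * g i) = hMh.eigenvalues from
        funext fun i => Real.mul_self_sqrt (hν0 i)]
    exact hspec.symm
  have hmsq : msqrt M = Um * diagonal g * Umᵀ := by
    unfold msqrt
    rw [dif_pos hMpsd]
    rfl
  have hdd : diagonal (fun i => 1 - g i) = 1 - diagonal g := by
    ext i j
    by_cases h : i = j <;> simp [diagonal, h]
  have hone_sub : (1 : Matrix (Fin k) (Fin k) ℝ) - msqrt M
      = Um * diagonal (fun i => 1 - g i) * Umᵀ := by
    rw [hmsq, hdd, Matrix.mul_sub, Matrix.mul_one, Matrix.sub_mul, hUmUt]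
  have hbound1 : ∀ i, |1 - g i| ≤ 6 * ε / σ := by
    intro i
    have h1 : |1 - g i| ≤ |1 - hMh.eigenvalues i| := abs_one_sub_sqrt (hν0 i)
    have h2 : |1 - hMh.eigenvalues i| ≤ c := by
      rw [abs_sub_comm]
      exact hνdist i
    have h3 : (276 / 121 : ℝ) * (ε / σ) ≤ 6 * ε / σ := by
      rw [mul_div_assoc]
      linarith
    linarith
  have hRHS1 : (0:ℝ) ≤ 6 * ε / σ := div_nonneg (by linarith) hσpos.le
  have goal1 : matSpectralNorm ((1 : Matrix (Fin k) (Fin k) ℝ) - msqrt M) ≤ 6 * ε / σ := by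
    rw [hone_sub]
    exact matSpectralNorm_conj_diag_le Um hUmU hUmUt _ hRHS1 hbound1
  -- inverse part
  have hglow : ∀ i, (98 / 121 : ℝ) ≤ g i := by
    intro i
    have h1 := abs_one_sub_sqrt (hν0 i)
    have h2 : |1 - hMh.eigenvalues i| ≤ 23 / 121 := by
      rw [abs_sub_comm]
      linarith [hνdist i]
    have h3 := abs_le.mp (le_trans h1 h2)
    linarith [h3.1]
  have hgpos : ∀ i, 0 < g i := fun i => lt_of_lt_of_le (by norm_num) (hglow i)
  have hinv : (msqrt M)⁻¹ = Um * diagonal (fun i => (g i)⁻¹) * Umᵀ := by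
    apply Matrix.inv_eq_right_inv
    rw [hmsq, Matrix.mul_assoc (Um * diagonal g) Umᵀ _, cancel _, ← Matrix.mul_assoc,
      Matrix.mul_assoc Um (diagonal g) _, diagonal_mul_diagonal,
      show (fun i => g i * (g i)⁻¹) = fun _ => (1:ℝ) from
        funext fun i => mul_inv_cancel₀ (hgpos i).ne',
      diagonal_one, Matrix.mul_one, hUmUt]
  have hdd2 : diagonal (fun i => 1 - (g i)⁻¹) = 1 - diagonal (fun i => (g i)⁻¹) := by
    ext i j
    by_cases h : i = j <;> simp [diagonal, h]
  have hone_sub2 : (1 : Matrix (Fin k) (Fin k) ℝ) - (msqrt M)⁻¹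
      = Um * diagonal (fun i => 1 - (g i)⁻¹) * Umᵀ := by
    rw [hinv, hdd2, Matrix.mul_sub, Matrix.mul_one, Matrix.sub_mul, hUmUt]
  have hbound2 : ∀ i, |1 - (g i)⁻¹| ≤ 12 * ε / σ := by
    intro i
    have hgi := hgpos i
    have h1 : |1 - g i| ≤ c := le_trans (abs_one_sub_sqrt (hν0 i))
      (by rw [abs_sub_comm]; exact hνdist i)
    have heq : 1 - (g i)⁻¹ = (g i - 1) / g i := by field_simp
    have h2 : |1 - (g i)⁻¹| = |1 - g i| / g i := by
      rw [heq, abs_div, abs_of_pos hgi, abs_sub_comm]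
    have h3 : |1 - g i| / g i ≤ c / (98 / 121) :=
      div_le_div₀ hc0 h1 (by norm_num) (hglow i)
    have h4 : c / (98 / 121 : ℝ) = (121 / 98) * c := by ring
    have h5 := mul_le_mul_of_nonneg_left hc2 (show (0:ℝ) ≤ 121 / 98 by norm_num)
    have h6 : (121 / 98 : ℝ) * ((276 / 121) * (ε / σ)) = (276 / 98) * (ε / σ) := by ring
    have h7 : (276 / 98 : ℝ) * (ε / σ) ≤ 12 * (ε / σ) := by linarith
    have h8 : 12 * (ε / σ) = 12 * ε / σ := by ring
    linarith
  have hRHS2 : (0:ℝ) ≤ 12 * ε / σ := div_nonneg (by linarith) hσpos.le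
  have goal2 : matSpectralNorm ((1 : Matrix (Fin k) (Fin k) ℝ) - (msqrt M)⁻¹) ≤ 12 * ε / σ := by
    rw [hone_sub2]
    exact matSpectralNorm_conj_diag_le Um hUmU hUmUt _ hRHS2 hbound2
  exact ⟨hPD, goal1, goal2⟩
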